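/- arXiv:0908.1129 — 7 statements merged into one kernel-verified Lean document; each statement's English description precedes it below -/
import Mathlib

section
/- If σ : ℝ → ℝ is continuous with 0 < σ_min ≤ σ(t) ≤ σ_max for all t, then the improper integral γ(t)² := (2 ∫_{−∞}^t e^{−2∫_k^t σ(s) ds} dk)^{−1} is well defined (the integral converges and is positive), and the functions γ_{1,2}(t) = ±√(γ(t)²) are solutions of ẋ = x(σ(t) − x²). -/
open MeasureTheory Real Set Filter intervalIntegral

lemma exp_mul_integrableOn_Iic {b : ℝ} (hb : 0 < b) (t : ℝ) :
    IntegrableOn (fun k => Real.exp (b * k)) (Set.Iic t) := by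
  refine integrableOn_Iic_of_intervalIntegral_norm_bounded (b⁻¹ * Real.exp (b * t)) t
    (fun y => ((Real.continuous_exp.comp (continuous_const.mul continuous_id)).intervalIntegrable
      _ _).1) tendsto_id ?_
  filter_upwards with y
  simp only [id]
  have h1 : (∫ k in y..t, ‖Real.exp (b * k)‖) = ∫ k in y..t, Real.exp (b * k) := by
    simp [Real.norm_eq_abs, abs_of_pos (Real.exp_pos _)]
  rw [h1, intervalIntegral.integral_comp_mul_left (fun x => Real.exp x) hb.ne',
    integral_exp, smul_eq_mul]
  have h2 := (Real.exp_pos (b * y)).le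
  have h3 : (0:ℝ) ≤ b⁻¹ := by positivity
  nlinarith [Real.exp_pos (b * t)]

/-- Under `0 < σmin ≤ σ(t) ≤ σmax`, the improper integral defining `γ(t)²` converges and is
positive, and the distinguished trajectories `γ₁,₂(t) = ±√(γ(t)²)` solve `ẋ = x(σ(t) - x²)`. -/
theorem stmt2 (σ : ℝ → ℝ) (hσ : Continuous σ) (σmin σmax : ℝ)
    (h1 : 0 < σmin) (h2 : ∀ t, σmin ≤ σ t) (h3 : ∀ t, σ t ≤ σmax) :
    (∀ t, IntegrableOn (fun k => Real.exp (-2 * ∫ s in k..t, σ s)) (Set.Iic t)) ∧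
    (∀ t, 0 < ∫ k in Set.Iic t, Real.exp (-2 * ∫ s in k..t, σ s)) ∧
    (∀ γ : ℝ → ℝ,
      (∀ t, γ t = Real.sqrt (1 / (2 * ∫ k in Set.Iic t, Real.exp (-2 * ∫ s in k..t, σ s)))) →
      ∀ t, HasDerivAt γ (γ t * (σ t - (γ t) ^ 2)) t) ∧
    (∀ γ : ℝ → ℝ,
      (∀ t, γ t = -Real.sqrt (1 / (2 * ∫ k in Set.Iic t, Real.exp (-2 * ∫ s in k..t, σ s)))) →
      ∀ t, HasDerivAt γ (γ t * (σ t - (γ t) ^ 2)) t) := by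
  -- antiderivative of σ
  set S : ℝ → ℝ := fun t => ∫ s in (0:ℝ)..t, σ s with hSdef
  have hSder : ∀ t, HasDerivAt S (σ t) t := fun t =>
    intervalIntegral.integral_hasDerivAt_right (hσ.intervalIntegrable 0 t)
      (hσ.stronglyMeasurableAtFilter _ _) hσ.continuousAt
  have hScont : Continuous S := Differentiable.continuous (fun t => (hSder t).differentiableAt)
  have hsub : ∀ k t : ℝ, (∫ s in k..t, σ s) = S t - S k := fun k t =>
    (intervalIntegral.integral_interval_sub_left (hσ.intervalIntegrable 0 t)
      (hσ.intervalIntegrable 0 k)).symm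
  have hfeq : ∀ t k : ℝ, Real.exp (-2 * ∫ s in k..t, σ s)
      = Real.exp (-2 * S t) * Real.exp (2 * S k) := by
    intro t k
    rw [hsub, ← Real.exp_add]
    ring_nf
  -- the key integrability
  have hgcont : Continuous (fun k => Real.exp (2 * S k)) :=
    Real.continuous_exp.comp (continuous_const.mul hScont)
  have hkey : ∀ t k : ℝ, k ≤ t → σmin * (t - k) ≤ S t - S k := by
    intro t k hk
    have := intervalIntegral.integral_mono_on hk (intervalIntegrable_const : IntervalIntegrable (fun _ => σmin) volume k t)
      (hσ.intervalIntegrable k t) (fun x _ => h2 x)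
    rw [intervalIntegral.integral_const, smul_eq_mul] at this
    rw [← hsub]
    linarith
  have hg_int : ∀ t, IntegrableOn (fun k => Real.exp (2 * S k)) (Set.Iic t) := by
    intro t
    have hb : (0:ℝ) < 2 * σmin := by linarith
    refine Integrable.mono'
      (((exp_mul_integrableOn_Iic hb t).const_mul (Real.exp (2 * S t - 2 * σmin * t))))
      hgcont.aestronglyMeasurable.restrict ?_
    refine (ae_restrict_iff' measurableSet_Iic).2 (ae_of_all _ fun k hk => ?_)
    have hk' : k ≤ t := hk
    have := hkey t k hk'
    rw [Real.norm_eq_abs, abs_of_pos (Real.exp_pos _), ← Real.exp_add]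
    exact Real.exp_le_exp.2 (by nlinarith)
  set G : ℝ → ℝ := fun t => ∫ k in Set.Iic t, Real.exp (2 * S k) with hGdef
  set F : ℝ → ℝ := fun t => Real.exp (-2 * S t) * G t with hFdef
  have hFeq : ∀ t, (∫ k in Set.Iic t, Real.exp (-2 * ∫ s in k..t, σ s)) = F t := by
    intro t
    simp only [hFdef, hGdef]
    rw [← MeasureTheory.integral_const_mul]
    exact setIntegral_congr_fun measurableSet_Iic fun k _ => hfeq t k
  have hf_int : ∀ t, IntegrableOn (fun k => Real.exp (-2 * ∫ s in k..t, σ s)) (Set.Iic t) := by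
    intro t
    have : (fun k => Real.exp (-2 * ∫ s in k..t, σ s))
        = fun k => Real.exp (-2 * S t) * Real.exp (2 * S k) := funext fun k => hfeq t k
    rw [this]
    exact (hg_int t).const_mul _
  have hGpos : ∀ t, 0 < G t := by
    intro t
    rw [hGdef]
    rw [setIntegral_pos_iff_support_of_nonneg_ae
      (ae_of_all _ fun k => (Real.exp_pos _).le) (hg_int t)]
    have hs : Function.support (fun k => Real.exp (2 * S k)) = Set.univ := by
      ext k; simp [Function.mem_support, (Real.exp_pos (2 * S k)).ne']
    rw [hs, Set.univ_inter, Real.volume_Iic]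
    exact ENNReal.zero_lt_top
  have hFpos : ∀ t, 0 < F t := fun t => mul_pos (Real.exp_pos _) (hGpos t)
  have hGder : ∀ t, HasDerivAt G (Real.exp (2 * S t)) t := by
    intro t
    have key : G = fun y => G 0 + ∫ k in (0:ℝ)..y, Real.exp (2 * S k) := by
      funext y
      have := intervalIntegral.integral_Iic_sub_Iic (hg_int 0) (hg_int y)
      simp only [hGdef]
      linarith [this]
    rw [key]
    exact (intervalIntegral.integral_hasDerivAt_right (hgcont.intervalIntegrable 0 t)
      (hgcont.stronglyMeasurableAtFilter _ _) hgcont.continuousAt).const_add (G 0)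
  have hFder : ∀ t, HasDerivAt F (1 - 2 * σ t * F t) t := by
    intro t
    have h1' : HasDerivAt (fun y => Real.exp (-2 * S y)) (Real.exp (-2 * S t) * (-2 * σ t)) t :=
      (((hSder t).const_mul (-2)).exp)
    have := h1'.mul (hGder t)
    have hone : Real.exp (-2 * S t) * Real.exp (2 * S t) = 1 := by
      rw [← Real.exp_add]; ring_nf; exact Real.exp_zero
    convert this using 1
    · rfl
    · rfl
    · rfl
    rw [hFdef]
    simp only []
    nlinarith [hone]
  have main : ∀ t, HasDerivAt (fun y => Real.sqrt (1 / (2 * F y)))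
      (Real.sqrt (1 / (2 * F t)) * (σ t - (Real.sqrt (1 / (2 * F t)))^2)) t := by
    intro t
    have hFt := hFpos t
    have hu : HasDerivAt (fun y => 1 / (2 * F y))
        ((0 * (2 * F t) - 1 * (2 * (1 - 2 * σ t * F t))) / (2 * F t)^2) t :=
      (hasDerivAt_const t (1:ℝ)).div ((hFder t).const_mul 2) (by positivity)
    have hut : (0:ℝ) < 1 / (2 * F t) := by positivity
    have hsq := (Real.hasDerivAt_sqrt hut.ne').comp t hu
    set g := Real.sqrt (1 / (2 * F t)) with hgdef
    have hg2 : g ^ 2 = 1 / (2 * F t) := Real.sq_sqrt hut.le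
    have hgpos : 0 < g := Real.sqrt_pos.2 hut
    convert hsq using 1
    · rfl
    · rfl
    · rfl
    have hrel : 2 * F t * g ^ 2 = 1 := by rw [hg2]; field_simp
    field_simp
    simp only [hFdef] at hrel
    linear_combination (-1) * (2 * (Real.exp (-2 * S t) * G t) * g ^ 2 + 1 - 2 * σ t * (Real.exp (-2 * S t) * G t)) * hrel
  refine ⟨hf_int, fun t => by rw [hFeq]; exact hFpos t, ?_, ?_⟩
  · intro γ hγ t
    have hγ' : γ = fun y => Real.sqrt (1 / (2 * F y)) := funext fun y => by rw [hγ y, hFeq y]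
    rw [hγ']
    exact main t
  · intro γ hγ t
    have hγ' : γ = fun y => -Real.sqrt (1 / (2 * F y)) := funext fun y => by rw [hγ y, hFeq y]
    rw [hγ']
    have := (main t).neg
    convert this using 1
    · rfl
    · rfl
    · rfl
    ring
end

section
/- Under the assumption 0 < σ_min ≤ σ(t) ≤ σ_max, every solution x(t, x_0, t_0) of ẋ = x(σ(t) − x²) with x_0 > 0 satisfies lim_{t→∞} (x(t, x_0, t_0) − γ_1(t)) = 0, where γ_1(t) = +√(γ(t)²) is the positive distinguished trajectory; i.e. γ_1 is forwards attracting on the half-line x_0 > 0. -/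
open MeasureTheory Real

section Aux

open Set Filter

private lemma expDeriv' {a : ℝ} (ha : a ≠ 0) (k : ℝ) :
    HasDerivAt (fun k => Real.exp (a * k) / a) (Real.exp (a * k)) k := by
  have h := ((Real.hasDerivAt_exp (a * k)).comp k ((hasDerivAt_id k).const_mul a)).div_const a
  simpa [mul_comm, mul_div_assoc, mul_div_cancel_left₀ _ ha] using h

private lemma expInt' {a : ℝ} (ha : 0 < a) (i t : ℝ) :
    ∫ k in i..t, Real.exp (a * k) = (Real.exp (a * t) - Real.exp (a * i)) / a := by
  rw [intervalIntegral.integral_eq_sub_of_hasDerivAt (fun k _ => expDeriv' ha.ne' k)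
    ((Real.continuous_exp.comp (continuous_const.mul continuous_id)).intervalIntegrable i t)]
  ring

private lemma intExp' {a : ℝ} (ha : 0 < a) (t : ℝ) :
    IntegrableOn (fun k => Real.exp (a * k)) (Set.Iic t) := by
  have hc : Continuous fun k => Real.exp (a * k) := by continuity
  apply integrableOn_Iic_of_intervalIntegral_norm_bounded (l := Filter.atBot) (a := id)
    (Real.exp (a * t) / a) t (fun i => hc.integrableOn_Ioc) Filter.tendsto_id
  filter_upwards with i
  have : ∀ k, ‖Real.exp (a * k)‖ = Real.exp (a * k) := fun k => abs_of_pos (Real.exp_pos _)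
  simp only [Real.norm_eq_abs, this, expInt' ha]
  have h2 := Real.exp_pos (a * (id i : ℝ))
  gcongr
  linarith

private lemma valExp' {a : ℝ} (ha : 0 < a) (t : ℝ) :
    ∫ k in Set.Iic t, Real.exp (a * k) = Real.exp (a * t) / a := by
  have h := integral_Iic_of_hasDerivAt_of_tendsto' (f := fun k => Real.exp (a * k) / a)
    (f' := fun k => Real.exp (a * k)) (a := t) (m := 0)
    (fun k _ => expDeriv' ha.ne' k) (intExp' ha t) ?_
  · simpa using h
  · have : Tendsto (fun k => a * k) atBot atBot :=
      Tendsto.const_mul_atBot ha Filter.tendsto_id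
    simpa using ((Real.tendsto_exp_atBot.comp this).div_const a)

private lemma invSqrtDiff' {u v c : ℝ} (hc : 0 < c) (hu : c ≤ u) (hv : c ≤ v) :
    |(Real.sqrt u)⁻¹ - (Real.sqrt v)⁻¹| ≤ |u - v| / (2 * c * Real.sqrt c) := by
  set a := Real.sqrt u with hadef
  set b := Real.sqrt v with hbdef
  have ha : 0 < a := Real.sqrt_pos.2 (hc.trans_le hu)
  have hb : 0 < b := Real.sqrt_pos.2 (hc.trans_le hv)
  have ha2 : a ^ 2 = u := Real.sq_sqrt (hc.le.trans hu)
  have hb2 : b ^ 2 = v := Real.sq_sqrt (hc.le.trans hv)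
  have hsa : Real.sqrt c ≤ a := Real.sqrt_le_sqrt hu
  have hsb : Real.sqrt c ≤ b := Real.sqrt_le_sqrt hv
  have hscpos : 0 < Real.sqrt c := Real.sqrt_pos.2 hc
  have hsc2 : Real.sqrt c ^ 2 = c := Real.sq_sqrt hc.le
  have e1 : (a⁻¹ - b⁻¹) * (a * b * (a + b)) = b ^ 2 - a ^ 2 := by
    field_simp
    ring
  have h5 : |a⁻¹ - b⁻¹| * (a * b * (a + b)) = |u - v| := by
    calc |a⁻¹ - b⁻¹| * (a * b * (a + b)) = |(a⁻¹ - b⁻¹) * (a * b * (a + b))| := by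
          rw [abs_mul, abs_of_pos (mul_pos (mul_pos ha hb) (add_pos ha hb))]
    _ = |b ^ 2 - a ^ 2| := by rw [e1]
    _ = |u - v| := by rw [ha2, hb2, abs_sub_comm]
  have h6 : |a⁻¹ - b⁻¹| = |u - v| / (a * b * (a + b)) :=
    eq_div_iff (mul_pos (mul_pos ha hb) (add_pos ha hb)).ne' |>.2 h5
  rw [h6]
  apply div_le_div_of_nonneg_left (abs_nonneg _) (by positivity)
  nlinarith [mul_le_mul hsa hsb hscpos.le ha.le]

end Aux

/-- Under `0 < σmin ≤ σ(t) ≤ σmax`, every solution of `ẋ = x(σ(t) - x²)` with `x₀ > 0`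
is forwards attracted to the distinguished trajectory `γ₁(t) = √(γ(t)²)`. -/
theorem stmt3 (σ : ℝ → ℝ) (hσ : Continuous σ) (σmin σmax : ℝ)
    (h1 : 0 < σmin) (h2 : ∀ t, σmin ≤ σ t) (h3 : ∀ t, σ t ≤ σmax)
    (γ1 : ℝ → ℝ)
    (hγ1 : ∀ t, γ1 t
      = Real.sqrt (1 / (2 * ∫ k in Set.Iic t, Real.exp (-2 * ∫ s in k..t, σ s))))
    (x0 t0 : ℝ) (hx0 : 0 < x0) (x : ℝ → ℝ) (hinit : x t0 = x0)
    (hode : ∀ t, t0 ≤ t → HasDerivAt x (x t * (σ t - (x t) ^ 2)) t) :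
    Filter.Tendsto (fun t => x t - γ1 t) Filter.atTop (nhds 0) := by
  open Set Filter in
  have h1' : 0 < σmax := h1.trans_le ((h2 t0).trans (h3 t0))
  -- the integrating factor
  set S : ℝ → ℝ := fun t => ∫ s in t0..t, σ s with hSdef
  have hSderiv : ∀ t, HasDerivAt S (σ t) t := fun t =>
    intervalIntegral.integral_hasDerivAt_right (hσ.intervalIntegrable t0 t)
      (hσ.stronglyMeasurableAtFilter _ _) hσ.continuousAt
  have hScont : Continuous S := continuous_iff_continuousAt.2 fun t => (hSderiv t).continuousAt
  have hS0 : S t0 = 0 := intervalIntegral.integral_same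
  have hSsub : ∀ a b : ℝ, S b - S a = ∫ s in a..b, σ s := by
    intro a b
    rw [hSdef]
    simp only
    rw [intervalIntegral.integral_interval_sub_left (hσ.intervalIntegrable t0 b)
      (hσ.intervalIntegrable t0 a)]
  have hSlb : ∀ a b : ℝ, a ≤ b → σmin * (b - a) ≤ S b - S a := by
    intro a b hab
    rw [hSsub]
    calc σmin * (b - a) = ∫ s in a..b, σmin := by
          rw [intervalIntegral.integral_const, smul_eq_mul]; ring
    _ ≤ ∫ s in a..b, σ s := intervalIntegral.integral_mono_on hab
        (intervalIntegrable_const) (hσ.intervalIntegrable a b) (fun s _ => h2 s)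
  have hSub : ∀ a b : ℝ, a ≤ b → S b - S a ≤ σmax * (b - a) := by
    intro a b hab
    rw [hSsub]
    calc (∫ s in a..b, σ s) ≤ ∫ s in a..b, σmax := intervalIntegral.integral_mono_on hab
          (hσ.intervalIntegrable a b) (intervalIntegrable_const) (fun s _ => h3 s)
    _ = σmax * (b - a) := by rw [intervalIntegral.integral_const, smul_eq_mul]; ring
  set F : ℝ → ℝ := fun t => Real.exp (2 * S t) with hFdef
  have hFderiv : ∀ t, HasDerivAt F (2 * σ t * F t) t := by
    intro t
    have := ((hSderiv t).const_mul 2).exp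
    simpa [hFdef, mul_comm] using this
  have hFcont : Continuous F := Real.continuous_exp.comp (continuous_const.mul hScont)
  have hFpos : ∀ t, 0 < F t := fun t => Real.exp_pos _
  have hF0 : F t0 = 1 := by rw [hFdef]; simp [hS0]
  -- positivity of solutions
  have hxcont : ContinuousOn x (Ici t0) := fun t ht =>
    ((hode t ht).continuousAt).continuousWithinAt
  have hxpos : ∀ t, t0 ≤ t → 0 < x t := by
    set g : ℝ → ℝ := fun t => x (max t t0) with hgdef
    have hgcont : Continuous g :=
      hxcont.comp_continuous (continuous_id.max continuous_const) (fun t => Set.mem_Ici.2 (le_max_right _ _))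
    have hgx : ∀ t, t0 ≤ t → g t = x t := fun t ht => by simp [hgdef, max_eq_left ht]
    have hgc2 : Continuous fun s => σ s - g s ^ 2 := hσ.sub (hgcont.pow 2)
    set G : ℝ → ℝ := fun t => ∫ s in t0..t, (σ s - g s ^ 2) with hGdef
    have hGderiv : ∀ t, HasDerivAt G (σ t - g t ^ 2) t := fun t =>
      intervalIntegral.integral_hasDerivAt_right (hgc2.intervalIntegrable t0 t)
        (hgc2.stronglyMeasurableAtFilter _ _) hgc2.continuousAt
    set u : ℝ → ℝ := fun s => x s * Real.exp (-G s) with hudef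
    have huderiv : ∀ s, t0 ≤ s → HasDerivAt u 0 s := by
      intro s hs
      have h := (hode s hs).mul ((hGderiv s).neg.exp
        : HasDerivAt (fun s => Real.exp (-G s)) (Real.exp (-G s) * -(σ s - g s ^ 2)) s)
      rw [hgx s hs] at h
      refine h.congr_deriv ?_
      ring
    intro t ht
    have key : u t = u t0 := by
      rcases eq_or_lt_of_le ht with rfl | hlt
      · rfl
      · exact constant_of_has_deriv_right_zero
          (fun s hs => ((huderiv s hs.1).continuousAt).continuousWithinAt)
          (fun s hs => (huderiv s hs.1).hasDerivWithinAt) t ⟨ht, le_rfl⟩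
    have hG0 : G t0 = 0 := intervalIntegral.integral_same
    have hkey : x t * Real.exp (-G t) = x0 := by
      simpa [hudef, hG0, hinit] using key
    have hx : x t = x0 * Real.exp (G t) := by
      have he := Real.exp_pos (-G t)
      field_simp [Real.exp_neg] at hkey ⊢
      rw [← hkey, mul_assoc, ← Real.exp_add, neg_add_cancel, Real.exp_zero, mul_one]
    rw [hx]; positivity
  -- the Bernoulli substitution: (x t ^ 2)⁻¹ solves a linear equation
  have hYderiv : ∀ s, t0 ≤ s → HasDerivAt (fun s => (x s ^ 2)⁻¹ * F s) (2 * F s) s := by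
    intro s hs
    have hxne : x s ≠ 0 := (hxpos s hs).ne'
    have h := (((hode s hs).pow 2).inv (pow_ne_zero 2 hxne)).mul (hFderiv s)
    refine h.congr_deriv ?_
    simp only [Pi.pow_apply, Pi.inv_apply]
    field_simp
    ring
  have hu_eq : ∀ t, t0 ≤ t →
      (x t ^ 2)⁻¹ = ((x0 ^ 2)⁻¹ + ∫ k in t0..t, 2 * F k) / F t := by
    intro t ht
    have hint : ∫ k in t0..t, 2 * F k = (x t ^ 2)⁻¹ * F t - (x t0 ^ 2)⁻¹ * F t0 :=
      intervalIntegral.integral_eq_sub_of_hasDerivAt_of_le ht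
        (fun s hs => (hYderiv s hs.1).continuousAt.continuousWithinAt)
        (fun s hs => hYderiv s hs.1.le)
        ((continuous_const.mul hFcont).intervalIntegrable t0 t)
    rw [hinit, hF0] at hint
    rw [hint]
    rw [mul_one, add_sub_cancel, mul_div_assoc, div_self (hFpos t).ne', mul_one]
  -- pointwise exponential bounds on F
  have hFub : ∀ t k : ℝ, k ≤ t →
      F k ≤ (F t * Real.exp (-(2*σmin) * t)) * Real.exp ((2*σmin) * k) := by
    intro t k hk
    have hb := hSlb k t hk
    rw [hFdef]
    simp only
    rw [← Real.exp_add, ← Real.exp_add, Real.exp_le_exp]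
    nlinarith [hb]
  have hFlb : ∀ t k : ℝ, k ≤ t →
      (F t * Real.exp (-(2*σmax) * t)) * Real.exp ((2*σmax) * k) ≤ F k := by
    intro t k hk
    have hb := hSub k t hk
    rw [hFdef]
    simp only
    rw [← Real.exp_add, ← Real.exp_add, Real.exp_le_exp]
    nlinarith [hb]
  -- integrability of F on half-lines
  have hJint : ∀ t : ℝ, IntegrableOn F (Set.Iic t) := by
    intro t
    apply Integrable.mono (((intExp' (by positivity : (0:ℝ) < 2*σmin) t).const_mul
      (F t * Real.exp (-(2*σmin) * t))))
      (hFcont.aestronglyMeasurable.restrict)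
    rw [ae_restrict_iff' measurableSet_Iic]
    filter_upwards with k hk
    rw [Real.norm_eq_abs, Real.norm_eq_abs, abs_of_pos (hFpos k),
      abs_of_pos (by have := hFpos t; positivity)]
    exact hFub t k hk
  set J : ℝ → ℝ := fun t => ∫ k in Set.Iic t, F k with hJdef
  have hJub : ∀ t, J t ≤ F t / (2*σmin) := by
    intro t
    have hle : J t ≤ ∫ k in Set.Iic t,
        (F t * Real.exp (-(2*σmin) * t)) * Real.exp ((2*σmin) * k) := by
      apply setIntegral_mono_on (hJint t)
        ((intExp' (by positivity : (0:ℝ) < 2*σmin) t).const_mul _) measurableSet_Iic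
      intro k hk
      exact hFub t k hk
    rw [integral_const_mul, valExp' (by positivity : (0:ℝ) < 2*σmin)] at hle
    calc J t ≤ _ := hle
    _ = F t * (Real.exp (-(2*σmin) * t) * Real.exp ((2*σmin) * t)) / (2*σmin) := by ring
    _ = F t / (2*σmin) := by
        rw [← Real.exp_add]; ring_nf; rw [Real.exp_zero]; ring
  have hJlb : ∀ t, F t / (2*σmax) ≤ J t := by
    intro t
    have hle : (∫ k in Set.Iic t,
        (F t * Real.exp (-(2*σmax) * t)) * Real.exp ((2*σmax) * k)) ≤ J t := by
      apply setIntegral_mono_on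
        ((intExp' (by positivity : (0:ℝ) < 2*σmax) t).const_mul _) (hJint t) measurableSet_Iic
      intro k hk
      exact hFlb t k hk
    rw [integral_const_mul, valExp' (by positivity : (0:ℝ) < 2*σmax)] at hle
    calc F t / (2*σmax)
        = F t * (Real.exp (-(2*σmax) * t) * Real.exp ((2*σmax) * t)) / (2*σmax) := by
          rw [← Real.exp_add]; ring_nf; rw [Real.exp_zero]; ring
    _ = F t * Real.exp (-(2*σmax) * t) * (Real.exp ((2*σmax) * t) / (2*σmax)) := by ring
    _ ≤ J t := hle
  have hJpos : ∀ t, 0 < J t := fun t =>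
    lt_of_lt_of_le (by have := hFpos t; positivity) (hJlb t)
  have hJsplit : ∀ t, t0 ≤ t → J t = J t0 + ∫ k in t0..t, F k := by
    intro t ht
    rw [hJdef]
    simp only
    rw [← Set.Iic_union_Ioc_eq_Iic ht,
      setIntegral_union (Set.Iic_disjoint_Ioc le_rfl) measurableSet_Ioc (hJint t0)
        (((hJint t).mono_set Set.Ioc_subset_Iic_self)),
      intervalIntegral.integral_of_le ht]
  -- rewriting γ1
  have hγ : ∀ t, γ1 t = Real.sqrt (F t / (2 * J t)) := by
    intro t
    rw [hγ1 t]
    congr 1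
    have hk : ∀ k : ℝ, Real.exp (-2 * ∫ s in k..t, σ s) = (F t)⁻¹ * F k := by
      intro k
      rw [← hSsub k t, hFdef]
      simp only
      rw [← Real.exp_neg, ← Real.exp_add]
      congr 1
      ring
    rw [show (fun k => Real.exp (-2 * ∫ s in k..t, σ s)) = fun k => (F t)⁻¹ * F k from
      funext hk]
    rw [integral_const_mul]
    rw [show (2 * ((F t)⁻¹ * ∫ k in Set.Iic t, F k) : ℝ) = 2 * J t / F t by
      rw [hJdef]; field_simp]
    rw [one_div, inv_div]
  -- the constant discrepancy
  set C : ℝ := (x0 ^ 2)⁻¹ - 2 * J t0 with hCdef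
  have huv : ∀ t, t0 ≤ t → (x t ^ 2)⁻¹ - 2 * J t / F t = C / F t := by
    intro t ht
    rw [hu_eq t ht, hJsplit t ht, intervalIntegral.integral_const_mul, hCdef]
    rw [div_sub_div_same]
    congr 1
    ring
  -- growth of F
  have hFgrow : ∀ t, t0 ≤ t → Real.exp ((2*σmin) * (t - t0)) ≤ F t := by
    intro t ht
    have := hSlb t0 t ht
    rw [hS0, sub_zero] at this
    rw [hFdef]
    simp only [Real.exp_le_exp]
    nlinarith
  -- quantities for the endgame
  set c : ℝ := 1 / (2*σmax) with hcdef
  have hcpos : 0 < c := by positivity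
  have hdecay : Filter.Tendsto (fun t => |C| * Real.exp (-(2*σmin) * (t - t0)))
      Filter.atTop (nhds 0) := by
    have h0 : Filter.Tendsto (fun t : ℝ => -(2*σmin) * (t - t0)) Filter.atTop Filter.atBot := by
      apply Filter.Tendsto.const_mul_atTop_of_neg (by linarith : -(2*σmin) < 0)
      exact Filter.tendsto_atTop_add_const_right _ _ Filter.tendsto_id
    simpa using (Real.tendsto_exp_atBot.comp h0).const_mul |C|
  apply squeeze_zero_norm' (a := fun t =>
    (|C| * Real.exp (-(2*σmin) * (t - t0))) / (2 * c * Real.sqrt c))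
  · -- eventual bound
    have hev1 : ∀ᶠ t in Filter.atTop,
        |C| * Real.exp (-(2*σmin) * (t - t0)) ≤ c := by
      exact hdecay.eventually (eventually_le_nhds hcpos)
    filter_upwards [hev1, Filter.eventually_ge_atTop t0] with t hev ht
    set u : ℝ := (x t ^ 2)⁻¹ with hudef2
    set v : ℝ := 2 * J t / F t with hvdef
    have hvlb : 2 * c ≤ v := by
      have h9 := hJlb t
      rw [div_le_iff₀ (by positivity : (0:ℝ) < 2*σmax)] at h9
      rw [hvdef, hcdef, le_div_iff₀ (hFpos t)]
      rw [show (2:ℝ) * (1/(2*σmax)) = 1/σmax by field_simp]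
      rw [div_mul_eq_mul_div, one_mul, div_le_iff₀ h1']
      linarith [h9]
    have hest : |u - v| ≤ |C| * Real.exp (-(2*σmin) * (t - t0)) := by
      rw [huv t ht, abs_div, abs_of_pos (hFpos t)]
      calc |C| / F t ≤ |C| / Real.exp ((2*σmin) * (t - t0)) := by
            apply div_le_div_of_nonneg_left (abs_nonneg _) (Real.exp_pos _) (hFgrow t ht)
      _ = |C| * Real.exp (-(2*σmin) * (t - t0)) := by
            rw [show -(2*σmin)*(t-t0) = -(2*σmin*(t-t0)) by ring, Real.exp_neg,
              div_eq_mul_inv]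
    have hulb : c ≤ u := by
      have h7 := neg_abs_le (u - v)
      have h8 : -(c : ℝ) ≤ u - v := le_trans (by linarith [hest.trans hev]) h7
      linarith
    have hxt : x t = (Real.sqrt u)⁻¹ := by
      rw [hudef2, ← Real.sqrt_inv, inv_inv, Real.sqrt_sq (hxpos t ht).le]
    have hγt : γ1 t = (Real.sqrt v)⁻¹ := by
      rw [hγ t, hvdef, ← Real.sqrt_inv, inv_div]
    rw [Real.norm_eq_abs, hxt, hγt]
    calc |(Real.sqrt u)⁻¹ - (Real.sqrt v)⁻¹| ≤ |u - v| / (2 * c * Real.sqrt c) :=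
          invSqrtDiff' hcpos hulb (by linarith)
    _ ≤ (|C| * Real.exp (-(2*σmin) * (t - t0))) / (2 * c * Real.sqrt c) := by
          apply div_le_div_of_nonneg_right hest (by positivity)
  · simpa using hdecay.div_const (2 * c * Real.sqrt c)
end

section
/- Under the assumption 0 < σ_min ≤ σ(t) ≤ σ_max, the distinguished trajectory γ_1 of ẋ = x(σ(t) − x²) is pullback attracting on x_0 > 0: for each fixed t, lim_{t_0 → −∞} (x(t, x_0, t_0)² − γ(t)²) = 0 for all x_0 > 0. -/
open MeasureTheory Real Filter

/-- Under `0 < σmin ≤ σ(t) ≤ σmax`, the distinguished trajectory of `ẋ = x(σ(t) - x²)` is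
pullback attracting on `x₀ > 0`: for fixed `t`, `x(t,x₀,t₀)² - γ(t)² → 0` as `t₀ → -∞`. -/
theorem stmt4 (σ : ℝ → ℝ) (hσ : Continuous σ) (σmin σmax : ℝ)
    (h1 : 0 < σmin) (h2 : ∀ t, σmin ≤ σ t) (h3 : ∀ t, σ t ≤ σmax)
    (γsq : ℝ → ℝ)
    (hγ : ∀ t, γsq t = 1 / (2 * ∫ k in Set.Iic t, Real.exp (-2 * ∫ s in k..t, σ s)))
    (X2 : ℝ → ℝ → ℝ → ℝ)
    (hX2 : ∀ t x0 t0, X2 t x0 t0 =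
      1 / ((1 / x0 ^ 2) * Real.exp (-2 * ∫ s in t0..t, σ s)
        + 2 * ∫ k in t0..t, Real.exp (-2 * ∫ s in k..t, σ s)))
    (t x0 : ℝ) (hx0 : 0 < x0) :
    Filter.Tendsto (fun t0 => X2 t x0 t0 - γsq t) Filter.atBot (nhds 0) := by
  set f : ℝ → ℝ := fun k => Real.exp (-2 * ∫ s in k..t, σ s) with hfdef
  have hσint : ∀ a b : ℝ, IntervalIntegrable σ volume a b :=
    fun a b => hσ.intervalIntegrable a b
  -- continuity of f
  have hprim : Continuous fun k => ∫ s in t..k, σ s :=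
    intervalIntegral.continuous_primitive hσint t
  have hfcont : Continuous f := by
    have h0 : Continuous fun k => -2 * ∫ s in k..t, σ s := by
      have hneg : Continuous fun k => -∫ s in t..k, σ s := hprim.neg
      have heq : (fun k => -∫ s in t..k, σ s) = fun k => ∫ s in k..t, σ s := by
        funext k; rw [intervalIntegral.integral_symm, neg_neg]
      rw [heq] at hneg
      exact continuous_const.mul hneg
    exact Real.continuous_exp.comp h0
  -- lower bound on the integral of σ
  have hlow : ∀ k, k ≤ t → σmin * (t - k) ≤ ∫ s in k..t, σ s := by
    intro k hk
    have := intervalIntegral.integral_mono_on hk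
      (intervalIntegrable_const (c := σmin)) (hσint k t) (fun x _ => h2 x)
    simpa [mul_comm] using this
  -- pointwise bound on f
  have hfbound : ∀ k, k ≤ t → f k ≤ Real.exp (2 * σmin * (k - t)) := by
    intro k hk
    apply Real.exp_le_exp.2
    have := hlow k hk
    nlinarith
  have hc : (2 * σmin) ≠ 0 := by positivity
  -- integrability of f on Iic t
  have hfint : IntegrableOn f (Set.Iic t) := by
    apply integrableOn_Iic_of_intervalIntegral_norm_bounded (1 / (2 * σmin)) t
      (fun i => (hfcont.integrableOn_Ioc)) (tendsto_id (α := ℝ))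
    filter_upwards [eventually_le_atBot t] with a ha
    calc ∫ k in a..t, ‖f k‖ ≤ ∫ k in a..t, Real.exp (2 * σmin * (k - t)) := by
          apply intervalIntegral.integral_mono_on ha
          · exact (hfcont.norm).intervalIntegrable a t
          · exact ((Real.continuous_exp.comp (by continuity)).intervalIntegrable a t)
          · intro k hk
            rw [Real.norm_eq_abs, abs_of_pos (Real.exp_pos _)]
            exact hfbound k hk.2
      _ ≤ 1 / (2 * σmin) := by
          have heq : ∫ k in a..t, Real.exp (2 * σmin * (k - t))
              = (2 * σmin)⁻¹ * (1 - Real.exp (2 * σmin * (a - t))) := by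
            rw [show (fun k => Real.exp (2 * σmin * (k - t)))
                = (fun k => (fun u => Real.exp (2 * σmin * u)) (k - t)) from rfl]
            rw [intervalIntegral.integral_comp_sub_right (fun u => Real.exp (2 * σmin * u)) t]
            rw [intervalIntegral.integral_comp_mul_left (fun u => Real.exp u) hc]
            rw [integral_exp]
            simp [smul_eq_mul]
          rw [heq, one_div]
          have he : 0 < Real.exp (2 * σmin * (a - t)) := Real.exp_pos _
          have hinv : (0:ℝ) ≤ (2 * σmin)⁻¹ := by positivity
          nlinarith
  set I : ℝ := ∫ k in Set.Iic t, f k with hI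
  -- positivity of I
  have hIpos : 0 < I := by
    rw [hI]
    rw [setIntegral_pos_iff_support_of_nonneg_ae ?_ hfint]
    · have hsupp : Function.support f = Set.univ := by
        ext k; simp [hfdef, Real.exp_ne_zero]
      rw [hsupp, Set.univ_inter, Real.volume_Iic]
      exact ENNReal.zero_lt_top
    · filter_upwards with k using le_of_lt (Real.exp_pos _)
  -- limit of interval integral
  have hJ : Tendsto (fun t0 => ∫ k in t0..t, f k) atBot (nhds I) :=
    intervalIntegral_tendsto_integral_Iic t hfint tendsto_id
  -- exp term tends to 0
  have hE : Tendsto (fun t0 => f t0) atBot (nhds 0) := by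
    have hup : Tendsto (fun t0 => Real.exp (2 * σmin * (t0 - t))) atBot (nhds 0) := by
      apply Real.tendsto_exp_atBot.comp
      apply Tendsto.const_mul_atBot (by positivity : (0:ℝ) < 2 * σmin)
      exact tendsto_atBot_add_const_right atBot (-t) tendsto_id
    apply tendsto_of_tendsto_of_tendsto_of_le_of_le' tendsto_const_nhds hup
    · filter_upwards with k using le_of_lt (Real.exp_pos _)
    · filter_upwards [eventually_le_atBot t] with k hk using hfbound k hk
  -- denominator limit
  have hD : Tendsto (fun t0 => (1 / x0 ^ 2) * f t0 + 2 * ∫ k in t0..t, f k)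
      atBot (nhds (2 * I)) := by
    have := ((hE.const_mul (1 / x0 ^ 2)).add (hJ.const_mul 2))
    simpa using this
  have h2I : (2 * I) ≠ 0 := by positivity
  have hinv : Tendsto (fun t0 => 1 / ((1 / x0 ^ 2) * f t0 + 2 * ∫ k in t0..t, f k))
      atBot (nhds (1 / (2 * I))) := by
    simpa [one_div] using hD.inv₀ h2I
  have hfinal := hinv.sub_const (1 / (2 * I))
  rw [sub_self] at hfinal
  simp only [hX2, hγ]
  exact hfinal
end

section
/- For the ODE ẋ = x(σ(t) − x²) with σ continuous and σ(t) ≤ σ_max < 0 for all t ≤ t*, the trivial solution is globally pullback stable on (−∞, t*]: for every x_0 ∈ ℝ and every t ≤ t*, lim_{t_0 → −∞} x(t, x_0, t_0) = 0. -/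
/-- If `σ(t) ≤ σmax < 0` for all `t ≤ t*`, the trivial solution of `ẋ = x(σ(t) - x²)` is
globally pullback stable on `(-∞, t*]`: for every `x₀` and `t ≤ t*`,
`x(t, x₀, t₀) → 0` as `t₀ → -∞`. -/
theorem stmt5 (σ : ℝ → ℝ) (hσ : Continuous σ) (σmax tstar : ℝ) (hσmax : σmax < 0)
    (hb : ∀ t, t ≤ tstar → σ t ≤ σmax)
    (x : ℝ → ℝ → ℝ → ℝ)
    (hinit : ∀ x0 t0, x t0 x0 t0 = x0)
    (hode : ∀ x0 t0 t, t0 ≤ t →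
      HasDerivAt (fun s => x s x0 t0) (x t x0 t0 * (σ t - (x t x0 t0) ^ 2)) t) :
    ∀ x0 t, t ≤ tstar → Filter.Tendsto (fun t0 => x t x0 t0) Filter.atBot (nhds 0) := by
  intro x0 t ht
  have key : ∀ t0, t0 ≤ t → |x t x0 t0| ≤ |x0| * Real.exp (σmax * (t - t0)) := by
    intro t0 ht0
    set f : ℝ → ℝ := fun s => x s x0 t0 with hfdef
    set g : ℝ → ℝ := fun s => f s ^ 2 * Real.exp (-(2 * σmax) * s) with hgdef
    have hderiv : ∀ s, t0 ≤ s → HasDerivAt g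
        ((2 * f s ^ 1 * (f s * (σ s - f s ^ 2))) * Real.exp (-(2 * σmax) * s)
          + f s ^ 2 * (Real.exp (-(2 * σmax) * s) * (-(2 * σmax)))) s := by
      intro s hs
      have h1 : HasDerivAt (fun s => f s ^ 2)
          (2 * f s ^ 1 * (f s * (σ s - f s ^ 2))) s := (hode x0 t0 s hs).pow 2
      have h2 : HasDerivAt (fun s => Real.exp (-(2 * σmax) * s))
          (Real.exp (-(2 * σmax) * s) * (-(2 * σmax))) s := by
        have := ((hasDerivAt_id s).const_mul (-(2 * σmax))).exp
        simpa [mul_comm] using this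
      exact h1.mul h2
    have hanti : AntitoneOn g (Set.Icc t0 t) := by
      apply antitoneOn_of_deriv_nonpos (convex_Icc t0 t)
      · exact fun s hs => ((hderiv s hs.1).continuousAt).continuousWithinAt
      · intro s hs
        rw [interior_Icc] at hs
        exact (hderiv s hs.1.le).differentiableAt.differentiableWithinAt
      · intro s hs
        rw [interior_Icc] at hs
        rw [(hderiv s hs.1.le).deriv]
        have hσs : σ s ≤ σmax := hb s (le_trans hs.2.le ht)
        have he : (0:ℝ) < Real.exp (-(2 * σmax) * s) := Real.exp_pos _
        nlinarith [mul_nonneg (mul_nonneg (sq_nonneg (f s)) he.le) (sub_nonneg.2 hσs),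
          mul_nonneg (mul_nonneg (sq_nonneg (f s)) (sq_nonneg (f s))) he.le]
    have hle : g t ≤ g t0 := hanti (Set.left_mem_Icc.2 ht0) (Set.right_mem_Icc.2 ht0) ht0
    have hg0 : g t0 = x0 ^ 2 * Real.exp (-(2 * σmax) * t0) := by
      simp [hgdef, hfdef, hinit]
    have hsq : f t ^ 2 ≤ x0 ^ 2 * Real.exp (2 * σmax * (t - t0)) := by
      have h := hle
      rw [hg0] at h
      have he : (0:ℝ) < Real.exp (-(2 * σmax) * t) := Real.exp_pos _
      have : f t ^ 2 ≤ x0 ^ 2 * Real.exp (-(2 * σmax) * t0) / Real.exp (-(2 * σmax) * t) := by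
        rw [le_div_iff₀ he]; exact h
      calc f t ^ 2 ≤ x0 ^ 2 * Real.exp (-(2 * σmax) * t0) / Real.exp (-(2 * σmax) * t) := this
        _ = x0 ^ 2 * Real.exp (2 * σmax * (t - t0)) := by
            rw [mul_div_assoc, ← Real.exp_sub]; ring_nf
    have : |f t| ≤ |x0| * Real.exp (σmax * (t - t0)) := by
      have h1 : Real.sqrt (f t ^ 2) ≤ Real.sqrt (x0 ^ 2 * Real.exp (2 * σmax * (t - t0))) :=
        Real.sqrt_le_sqrt hsq
      rw [Real.sqrt_sq_eq_abs] at h1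
      rw [Real.sqrt_mul (sq_nonneg x0), Real.sqrt_sq_eq_abs] at h1
      have h2 : Real.sqrt (Real.exp (2 * σmax * (t - t0))) = Real.exp (σmax * (t - t0)) := by
        have he : Real.exp (2 * σmax * (t - t0)) = Real.exp (σmax * (t - t0)) ^ 2 := by
          rw [sq, ← Real.exp_add]; ring_nf
        rw [he, Real.sqrt_sq (Real.exp_pos _).le]
      rwa [h2] at h1
    exact this
  have hbound : Filter.Tendsto (fun t0 => |x0| * Real.exp (σmax * (t - t0)))
      Filter.atBot (nhds 0) := by
    have h1 : Filter.Tendsto (fun t0 : ℝ => σmax * (t - t0)) Filter.atBot Filter.atBot := by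
      have h2 : Filter.Tendsto (fun t0 : ℝ => (-σmax) * t0) Filter.atBot Filter.atBot :=
        (Filter.tendsto_id (α := ℝ)).const_mul_atBot (by linarith)
      have h3 : Filter.Tendsto (fun t0 : ℝ => (-σmax) * t0 + σmax * t) Filter.atBot Filter.atBot :=
        Filter.tendsto_atBot_add_const_right _ _ h2
      have heq : (fun t0 : ℝ => σmax * (t - t0)) = fun t0 : ℝ => (-σmax) * t0 + σmax * t := by
        funext t0; ring
      rwa [heq]
    have h4 := (Real.tendsto_exp_atBot.comp h1).const_mul |x0|
    simpa using h4
  apply squeeze_zero_norm' _ hbound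
  filter_upwards [Filter.eventually_le_atBot t] with t0 ht0
  exact key t0 ht0
end

section
/- For the ODE ẋ = x(σ(t) − x²) with σ continuous and σ(t) ≤ σ_max < 0 for all t ≥ t**, the trivial solution is globally asymptotically stable on [t**, ∞): for every x_0 ∈ ℝ and every t_0 ≥ t**, lim_{t→∞} x(t, x_0, t_0) = 0. -/
/-- If `σ(t) ≤ σmax < 0` for all `t ≥ t**`, the trivial solution of `ẋ = x(σ(t) - x²)` is
globally asymptotically stable on `[t**, ∞)`: every solution starting at `t₀ ≥ t**`
converges to `0` as `t → ∞`. -/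
theorem stmt6 (σ : ℝ → ℝ) (hσ : Continuous σ) (σmax tss : ℝ) (hσmax : σmax < 0)
    (hb : ∀ t, tss ≤ t → σ t ≤ σmax)
    (x0 t0 : ℝ) (ht0 : tss ≤ t0) (x : ℝ → ℝ)
    (hinit : x t0 = x0)
    (hode : ∀ t, t0 ≤ t → HasDerivAt x (x t * (σ t - (x t) ^ 2)) t) :
    Filter.Tendsto x Filter.atTop (nhds 0) := by
  set g : ℝ → ℝ := fun t => (x t) ^ 2 * Real.exp (-(2 * σmax) * (t - t0)) with hg
  have hgderiv : ∀ t, t0 ≤ t → HasDerivAt g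
      ((2 * x t * (x t * (σ t - (x t) ^ 2))) * Real.exp (-(2 * σmax) * (t - t0))
        + (x t) ^ 2 * (Real.exp (-(2 * σmax) * (t - t0)) * (-(2 * σmax)))) t := by
    intro t ht
    have h1 : HasDerivAt (fun s => (x s) ^ 2) (2 * x t * (x t * (σ t - (x t) ^ 2))) t := by
      have h := (hode t ht).pow 2
      refine h.congr_deriv ?_
      push_cast
      ring
    have h2 : HasDerivAt (fun s => Real.exp (-(2 * σmax) * (s - t0)))
        (Real.exp (-(2 * σmax) * (t - t0)) * (-(2 * σmax))) t := by
      have hl : HasDerivAt (fun s : ℝ => -(2 * σmax) * (s - t0)) (-(2 * σmax)) t := by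
        simpa using ((hasDerivAt_id t).sub_const t0).const_mul (-(2 * σmax))
      have := (Real.hasDerivAt_exp (-(2 * σmax) * (t - t0))).comp t hl
      exact this
    exact h1.mul h2
  have hganti : AntitoneOn g (Set.Ici t0) := by
    apply antitoneOn_of_deriv_nonpos (convex_Ici t0)
    · intro t ht
      exact ((hgderiv t ht).continuousAt).continuousWithinAt
    · intro t ht
      rw [interior_Ici] at ht
      exact (hgderiv t (le_of_lt ht)).differentiableAt.differentiableWithinAt
    · intro t ht
      rw [interior_Ici] at ht
      have ht' : t0 ≤ t := le_of_lt ht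
      have hd := hgderiv t ht'
      rw [hd.deriv]
      have hexp : 0 < Real.exp (-(2 * σmax) * (t - t0)) := Real.exp_pos _
      have key : (2 * x t * (x t * (σ t - (x t) ^ 2)))
          + (x t) ^ 2 * (-(2 * σmax)) ≤ 0 := by
        have hσt : σ t ≤ σmax := hb t (le_trans ht0 ht')
        nlinarith [sq_nonneg (x t), sq_nonneg ((x t) ^ 2)]
      calc 2 * x t * (x t * (σ t - (x t) ^ 2)) * Real.exp (-(2 * σmax) * (t - t0))
            + (x t) ^ 2 * (Real.exp (-(2 * σmax) * (t - t0)) * (-(2 * σmax)))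
          = ((2 * x t * (x t * (σ t - (x t) ^ 2)))
              + (x t) ^ 2 * (-(2 * σmax))) * Real.exp (-(2 * σmax) * (t - t0)) := by ring
        _ ≤ 0 := mul_nonpos_of_nonpos_of_nonneg key hexp.le
  have hbound : ∀ t, t0 ≤ t → (x t) ^ 2 ≤ x0 ^ 2 * Real.exp (2 * σmax * (t - t0)) := by
    intro t ht
    have := hganti (Set.self_mem_Ici) (Set.mem_Ici.mpr ht) ht
    have hgt0 : g t0 = x0 ^ 2 := by simp [hg, hinit]
    rw [hgt0] at this
    have hexp : 0 < Real.exp (2 * σmax * (t - t0)) := Real.exp_pos _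
    have : (x t) ^ 2 * Real.exp (-(2 * σmax) * (t - t0)) * Real.exp (2 * σmax * (t - t0))
        ≤ x0 ^ 2 * Real.exp (2 * σmax * (t - t0)) :=
      mul_le_mul_of_nonneg_right this hexp.le
    rwa [mul_assoc, ← Real.exp_add, neg_mul, neg_add_cancel, Real.exp_zero, mul_one] at this
  have hto : Filter.Tendsto (fun t => x0 ^ 2 * Real.exp (2 * σmax * (t - t0)))
      Filter.atTop (nhds 0) := by
    rw [show (0 : ℝ) = x0 ^ 2 * 0 by ring]
    apply Filter.Tendsto.const_mul
    apply Real.tendsto_exp_atBot.comp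
    rw [Filter.tendsto_const_mul_atBot_of_neg (by linarith : 2 * σmax < 0)]
    simp only [sub_eq_add_neg]
    exact Filter.tendsto_atTop_add_const_right _ _ Filter.tendsto_id
  have hsq : Filter.Tendsto (fun t => (x t) ^ 2) Filter.atTop (nhds 0) := by
    apply tendsto_of_tendsto_of_tendsto_of_le_of_le' tendsto_const_nhds hto
    · exact Filter.Eventually.of_forall fun t => sq_nonneg _
    · exact Filter.eventually_atTop.mpr ⟨t0, hbound⟩
  have habs : Filter.Tendsto (fun t => |x t|) Filter.atTop (nhds 0) := by
    have := hsq.sqrt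
    simpa [Real.sqrt_sq_eq_abs] using this
  exact tendsto_zero_iff_abs_tendsto_zero x |>.mpr habs
end

section
/- Suppose the strain acceleration tensor M̂(t) restricted to the zero-strain set Z(t) is positive definite for all t in an interval I (i.e. the trajectory is in the hyperbolic region). Then the set Ψ⁺ of nondecreasing solutions is forward-time invariant: if a solution ξ of ξ̇ = A(t)ξ satisfies d/dm ‖X(m,t*)ξ(t*)‖ |_{m=t*} ≥ 0 at some t* ∈ I, then d/dm ‖ξ(m)‖ ≥ 0 at every t ∈ I with t ≥ t*. -/
open Matrix

/-- If the strain acceleration tensor `M̂(t)` is positive definite on the zero-strain set for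
all `t` in an interval `I` (hyperbolic region), then the set `Ψ⁺` of nondecreasing solutions
is forward-time invariant: a solution of `ξ̇ = A(t)ξ` with nondecreasing norm at `t* ∈ I`
has nondecreasing norm at every later `t ∈ I`. -/
theorem stmt15 (A A' : ℝ → Matrix (Fin 2) (Fin 2) ℝ)
    (hA' : ∀ t i j, HasDerivAt (fun s => A s i j) (A' t i j) t)
    (S Mhat : ℝ → Matrix (Fin 2) (Fin 2) ℝ)
    (hS : ∀ t, S t = (1 / 2 : ℝ) • (A t + (A t)ᵀ))
    (hM : ∀ t, Mhat t = (1 / 2 : ℝ) • (A' t + (A' t)ᵀ) + S t * A t + (A t)ᵀ * S t)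
    (I : Set ℝ) (hI : Convex ℝ I)
    (hInd : ∀ t ∈ I, (∃ u : Fin 2 → ℝ, 0 < u ⬝ᵥ (S t).mulVec u) ∧
      (∃ v : Fin 2 → ℝ, v ⬝ᵥ (S t).mulVec v < 0))
    (hpos : ∀ t ∈ I, ∀ z : Fin 2 → ℝ, z ≠ 0 → z ⬝ᵥ (S t).mulVec z = 0 →
      0 < z ⬝ᵥ (Mhat t).mulVec z)
    (ξ : ℝ → Fin 2 → ℝ)
    (hξ : ∀ t ∈ I, HasDerivAt ξ ((A t).mulVec (ξ t)) t)
    (tstar : ℝ) (htstar : tstar ∈ I)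
    (h0 : 0 ≤ ξ tstar ⬝ᵥ (S tstar).mulVec (ξ tstar)) :
    ∀ t ∈ I, tstar ≤ t → 0 ≤ ξ t ⬝ᵥ (S t).mulVec (ξ t) := by
  intro t1 ht1 hle
  by_contra hneg
  push_neg at hneg
  set g : ℝ → ℝ := fun s => ξ s ⬝ᵥ (S s).mulVec (ξ s) with hgdef
  have hneg' : g t1 < 0 := hneg
  have h0' : 0 ≤ g tstar := h0
  have hIcc : Set.Icc tstar t1 ⊆ I := hI.ordConnected.out htstar ht1
  -- componentwise derivatives of ξ
  have hxc : ∀ s ∈ I, ∀ i, HasDerivAt (fun m => ξ m i) ((A s).mulVec (ξ s) i) s := by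
    intro s hs i
    exact hasDerivAt_pi.mp (hξ s hs) i
  -- derivatives of entries of S
  have hSc : ∀ (s : ℝ) (i j : Fin 2), HasDerivAt (fun m => S m i j)
      ((1 / 2 : ℝ) * (A' s i j + A' s j i)) s := by
    intro s i j
    have : (fun m => S m i j) = fun m => (1 / 2 : ℝ) * (A m i j + A m j i) := by
      funext m
      rw [hS m]
      simp [Matrix.smul_apply, Matrix.add_apply, Matrix.transpose_apply, smul_eq_mul]
    rw [this]
    exact (((hA' s i j).add (hA' s j i)).const_mul _)
  -- derivative of g
  have hgderiv : ∀ s ∈ I, HasDerivAt g (ξ s ⬝ᵥ (Mhat s).mulVec (ξ s)) s := by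
    intro s hs
    have hx0 := hxc s hs 0
    have hx1 := hxc s hs 1
    have hD : HasDerivAt (fun m => ξ m 0 * (S m 0 0 * ξ m 0 + S m 0 1 * ξ m 1)
        + ξ m 1 * (S m 1 0 * ξ m 0 + S m 1 1 * ξ m 1))
        ((A s).mulVec (ξ s) 0 * (S s 0 0 * ξ s 0 + S s 0 1 * ξ s 1)
          + ξ s 0 * (((1/2:ℝ)*(A' s 0 0 + A' s 0 0) * ξ s 0 + S s 0 0 * ((A s).mulVec (ξ s) 0))
            + ((1/2:ℝ)*(A' s 0 1 + A' s 1 0) * ξ s 1 + S s 0 1 * ((A s).mulVec (ξ s) 1)))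
        + ((A s).mulVec (ξ s) 1 * (S s 1 0 * ξ s 0 + S s 1 1 * ξ s 1)
          + ξ s 1 * (((1/2:ℝ)*(A' s 1 0 + A' s 0 1) * ξ s 0 + S s 1 0 * ((A s).mulVec (ξ s) 0))
            + ((1/2:ℝ)*(A' s 1 1 + A' s 1 1) * ξ s 1 + S s 1 1 * ((A s).mulVec (ξ s) 1))))) s := by
      exact (hx0.mul (((hSc s 0 0).mul hx0).add ((hSc s 0 1).mul hx1))).add
        (hx1.mul (((hSc s 1 0).mul hx0).add ((hSc s 1 1).mul hx1)))
    have hgeq : g = fun m => ξ m 0 * (S m 0 0 * ξ m 0 + S m 0 1 * ξ m 1)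
        + ξ m 1 * (S m 1 0 * ξ m 0 + S m 1 1 * ξ m 1) := by
      funext m
      simp only [hgdef, dotProduct, Matrix.mulVec, Fin.sum_univ_two]
      try ring
    rw [hgeq]
    convert hD using 1
    rw [hM s, hS s]
    simp [dotProduct, Matrix.mulVec, Fin.sum_univ_two, Matrix.add_apply, Matrix.smul_apply,
      Matrix.mul_apply, Matrix.transpose_apply, smul_eq_mul]
    ring
  -- the squared norm u and its derivative
  set u : ℝ → ℝ := fun s => ξ s 0 ^ 2 + ξ s 1 ^ 2 with hudef
  have huderiv : ∀ s ∈ I, HasDerivAt u (2 * g s) s := by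
    intro s hs
    have hx0 := hxc s hs 0
    have hx1 := hxc s hs 1
    have hD : HasDerivAt u (2 * ξ s 0 ^ 1 * ((A s).mulVec (ξ s) 0)
        + 2 * ξ s 1 ^ 1 * ((A s).mulVec (ξ s) 1)) s := (hx0.pow 2).add (hx1.pow 2)
    convert hD using 1
    simp only [hgdef, hS s]
    simp [dotProduct, Matrix.mulVec, Fin.sum_univ_two, Matrix.add_apply, Matrix.smul_apply,
      Matrix.transpose_apply, smul_eq_mul]
    ring
  -- the crossing point τ
  have hts : tstar < t1 := by
    rcases lt_or_eq_of_le hle with h | h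
    · exact h
    · exact absurd h0' (by rw [h]; exact not_le.mpr hneg')
  set T : Set ℝ := {s | s ∈ Set.Icc tstar t1 ∧ 0 ≤ g s} with hTdef
  have hTne : T.Nonempty := ⟨tstar, ⟨le_refl _, le_of_lt hts⟩, h0'⟩
  have hTbdd : BddAbove T := ⟨t1, fun s hs => hs.1.2⟩
  set τ : ℝ := sSup T with hτdef
  have hτmem : τ ∈ Set.Icc tstar t1 :=
    ⟨le_csSup hTbdd ⟨⟨le_refl _, le_of_lt hts⟩, h0'⟩, csSup_le hTne fun s hs => hs.1.2⟩
  have hτI : τ ∈ I := hIcc hτmem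
  -- g τ ≥ 0 by continuity and closure
  have hgτ0 : 0 ≤ g τ := by
    have hclos : τ ∈ closure T := csSup_mem_closure hTne hTbdd
    have hcont : ContinuousWithinAt g T τ :=
      (hgderiv τ hτI).continuousAt.continuousWithinAt
    have hne : (nhdsWithin τ T).NeBot := mem_closure_iff_nhdsWithin_neBot.mp hclos
    exact ge_of_tendsto hcont (Filter.eventually_of_mem self_mem_nhdsWithin
      (fun s (hs : s ∈ T) => hs.2))
  have hτlt : τ < t1 := by
    rcases lt_or_eq_of_le hτmem.2 with h | h
    · exact h
    · exact absurd hgτ0 (by rw [h]; exact not_le.mpr hneg')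
  -- g < 0 strictly after τ
  have hafter : ∀ s, τ < s → s ≤ t1 → g s < 0 := by
    intro s h1 h2
    by_contra hc
    push_neg at hc
    have : s ∈ T := ⟨⟨le_trans hτmem.1 (le_of_lt h1), h2⟩, hc⟩
    exact absurd (le_csSup hTbdd this) (not_le.mpr h1)
  -- g τ ≤ 0 by right limit
  have hgτ0' : g τ ≤ 0 := by
    have hcont : ContinuousWithinAt g (Set.Ioc τ t1) τ :=
      (hgderiv τ hτI).continuousAt.continuousWithinAt
    have hclos : τ ∈ closure (Set.Ioc τ t1) := by
      rw [closure_Ioc (ne_of_lt hτlt)]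
      exact ⟨le_refl _, le_of_lt hτlt⟩
    have hne : (nhdsWithin τ (Set.Ioc τ t1)).NeBot := mem_closure_iff_nhdsWithin_neBot.mp hclos
    exact le_of_tendsto hcont (Filter.eventually_of_mem self_mem_nhdsWithin
      fun s hs => le_of_lt (hafter s hs.1 hs.2))
  have hgτ : g τ = 0 := le_antisymm hgτ0' hgτ0
  by_cases hz : ξ τ = 0
  · -- ξ τ = 0 : use MVT on u
    have huτ : u τ = 0 := by simp [hudef, hz]
    have hIcc' : Set.Icc τ t1 ⊆ I := fun s hs =>
      hIcc ⟨le_trans hτmem.1 hs.1, hs.2⟩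
    have hucont : ContinuousOn u (Set.Icc τ t1) := fun s hs =>
      (huderiv s (hIcc' hs)).continuousAt.continuousWithinAt
    obtain ⟨c, hc, hceq⟩ := exists_hasDerivAt_eq_slope u (fun s => 2 * g s) hτlt hucont
      (fun s hs => huderiv s (hIcc' ⟨le_of_lt hs.1, le_of_lt hs.2⟩))
    have hgc : g c < 0 := hafter c hc.1 (le_of_lt hc.2)
    have hpos' : 0 < t1 - τ := sub_pos.mpr hτlt
    have hkey : u t1 - u τ = 2 * g c * (t1 - τ) :=
      (div_eq_iff (ne_of_gt hpos')).mp hceq.symm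
    have hunn : 0 ≤ u t1 := add_nonneg (sq_nonneg _) (sq_nonneg _)
    nlinarith [mul_pos hpos' (neg_pos.mpr hgc)]
  · -- ξ τ ≠ 0 : positive derivative of g at τ, contradiction with g < 0 after τ
    have hDpos : 0 < ξ τ ⬝ᵥ (Mhat τ).mulVec (ξ τ) := hpos τ hτI (ξ τ) hz hgτ
    have hslope := hasDerivAt_iff_tendsto_slope.mp (hgderiv τ hτI)
    have hev : ∀ᶠ s in nhdsWithin τ {τ}ᶜ, 0 < slope g τ s :=
      hslope.eventually (eventually_gt_nhds hDpos)
    have hev' : ∀ᶠ s in nhdsWithin τ (Set.Ioi τ), 0 < slope g τ s :=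
      nhdsWithin_mono τ (fun s hs => ne_of_gt hs) hev
    have hIocmem : Set.Ioc τ t1 ∈ nhdsWithin τ (Set.Ioi τ) := by
      rw [← Set.Ioi_inter_Iic]
      exact Filter.inter_mem self_mem_nhdsWithin
        (mem_nhdsWithin_of_mem_nhds (Iic_mem_nhds hτlt))
    have hne : (nhdsWithin τ (Set.Ioi τ)).NeBot := by
      exact nhdsGT_neBot τ
    obtain ⟨s, hs1, hs2⟩ := (hev'.and (Filter.eventually_of_mem hIocmem fun s hs => hs)).exists
    have hsgt : τ < s := hs2.1
    have : 0 < g s := by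
      rw [slope_def_field] at hs1
      rcases div_pos_iff.mp hs1 with ⟨h3, _⟩ | ⟨_, h4⟩
      · linarith [hgτ]
      · linarith [sub_pos.mpr hsgt]
    exact absurd this (not_lt.mpr (le_of_lt (hafter s hsgt hs2.2)))
end

section
/- For the linear system ξ̇ = A(t)ξ on an interval I = [t_a, t_b], if the trajectory is in the hyperbolic region on I (Ŝ(t) indefinite and M̂(t) positive definite on the zero-strain set for all t ∈ I), then the t_a-fibre of the finite-time unstable set equals the set of nondecreasing directions at t_a: 𝕎^u_I(t_a) := {ξ ∈ ℝ² : d/dm ‖X(m,t_a)ξ‖ > 0 for all m ∈ I} has closure equal to Ψ⁺(t_a) = {ξ : d/dm ‖X(m,t_a)ξ‖ |_{m=t_a} ≥ 0}. -/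
open Matrix Topology Filter

/-- Expansion of a (not necessarily symmetric) quadratic form along a line. -/
lemma stmt16_quad_expand (S : Matrix (Fin 2) (Fin 2) ℝ) (ξ u : Fin 2 → ℝ) (c : ℝ) :
    (ξ + c • u) ⬝ᵥ S.mulVec (ξ + c • u)
      = ξ ⬝ᵥ S.mulVec ξ + c * (ξ ⬝ᵥ S.mulVec u + u ⬝ᵥ S.mulVec ξ) + c ^ 2 * (u ⬝ᵥ S.mulVec u) := by
  simp [Matrix.mulVec, dotProduct, Fin.sum_univ_two, smul_eq_mul]
  ring

/-- Barrier argument: if the quadratic strain `Q` is positive at `ta` and at any zero of `Q`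
(where the solution is nontrivial, witnessed by `N ta < N m`) its derivative `D` is positive,
then `Q` stays positive on `[ta, tb]`. -/
lemma stmt16_barrier (ta tb : ℝ) (Q N D : ℝ → ℝ)
    (hQd : ∀ m, HasDerivAt Q (D m) m)
    (hNd : ∀ m, HasDerivAt N (2 * Q m) m)
    (hD : ∀ m ∈ Set.Icc ta tb, N ta < N m → Q m = 0 → 0 < D m)
    (hQa : 0 < Q ta) :
    ∀ m ∈ Set.Icc ta tb, 0 < Q m := by
  have hQc : Continuous Q := by
    rw [continuous_iff_continuousAt]; exact fun m => (hQd m).continuousAt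
  by_contra hcon
  push_neg at hcon
  obtain ⟨m0, hm0, hQm0⟩ := hcon
  set K : Set ℝ := {m | m ∈ Set.Icc ta tb ∧ Q m ≤ 0} with hK
  have hKne : K.Nonempty := ⟨m0, hm0, hQm0⟩
  have hKcl : IsClosed K :=
    ((isClosed_Icc.preimage continuous_id).inter (isClosed_Iic.preimage hQc))
  have hKbdd : BddBelow K := ⟨ta, fun m hm => hm.1.1⟩
  set c := sInf K with hc
  have hcK : c ∈ K := hKcl.csInf_mem hKne hKbdd
  have hca : ta < c := by
    rcases lt_or_eq_of_le hcK.1.1 with h | h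
    · exact h
    · exfalso; rw [← h] at hcK; linarith [hcK.2]
  have hpos_before : ∀ m, m ∈ Set.Ico ta c → 0 < Q m := by
    intro m hm
    by_contra hneg
    push_neg at hneg
    have : m ∈ K := ⟨⟨hm.1, le_trans hm.2.le hcK.1.2⟩, hneg⟩
    exact absurd (csInf_le hKbdd this) (not_le.mpr hm.2)
  have hQc0 : Q c = 0 := by
    have h1 : Q c ≤ 0 := hcK.2
    have h2 : 0 ≤ Q c := by
      have hcl : c ∈ closure (Set.Ico ta c) := by
        rw [closure_Ico (ne_of_lt hca)]; exact ⟨le_of_lt hca, le_refl c⟩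
      have hne : (𝓝[Set.Ico ta c] c).NeBot := mem_closure_iff_nhdsWithin_neBot.mp hcl
      have := hne
      refine ge_of_tendsto (hQc.continuousAt.continuousWithinAt
        (s := Set.Ico ta c)) ?_
      filter_upwards [self_mem_nhdsWithin] with m hm
      exact (hpos_before m hm).le
    linarith
  -- N strictly increasing on [ta, c]
  have hNmono : StrictMonoOn N (Set.Icc ta c) := by
    apply StrictMonoOn.mono (s := Set.Icc ta c) ?_ (le_refl _)
    apply strictMonoOn_of_deriv_pos (convex_Icc ta c)
    · exact (Continuous.continuousOn (by
        rw [continuous_iff_continuousAt]; exact fun m => (hNd m).continuousAt))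
    · intro x hx
      rw [interior_Icc] at hx
      rw [(hNd x).deriv]
      have : 0 < Q x := hpos_before x ⟨hx.1.le, hx.2⟩
      linarith
  have hNlt : N ta < N c := hNmono ⟨le_refl ta, hca.le⟩ ⟨hca.le, le_refl c⟩ hca
  have hDc : 0 < D c := hD c hcK.1 hNlt hQc0
  -- slope contradiction from the left
  have hslope : Filter.Tendsto (slope Q c) (𝓝[<] c) (𝓝 (D c)) :=
    ((hasDerivAt_iff_tendsto_slope.mp (hQd c)).mono_left
      (nhdsWithin_mono c fun x hx => ne_of_lt hx))
  have h1 : ∀ᶠ m in 𝓝[<] c, 0 < slope Q c m :=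
    hslope.eventually (eventually_gt_nhds hDc)
  have h2 : ∀ᶠ m in 𝓝[<] c, ta < m :=
    eventually_nhdsWithin_of_eventually_nhds (eventually_gt_nhds hca)
  have h3 : ∀ᶠ m in 𝓝[<] c, m < c := eventually_mem_nhdsWithin
  obtain ⟨m, hm1, hm2, hm3⟩ := (h1.and (h2.and h3)).exists
  have hQm : 0 < Q m := hpos_before m ⟨hm2.le, hm3⟩
  have heq : slope Q c m = (Q m - Q c) / (m - c) := by
    simp [slope_def_field]
  rw [heq, hQc0, sub_zero] at hm1
  rcases div_pos_iff.mp hm1 with ⟨_, h⟩ | ⟨h, _⟩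
  · linarith
  · linarith

/-- If the trajectory is in the hyperbolic region on `I = [t_a, t_b]` (`Ŝ` indefinite, `M̂`
positive definite on the zero-strain set), then the closure of the `t_a`-fibre of the
finite-time unstable set (directions whose norm under the fundamental matrix `X(m, t_a)` is
strictly increasing on `I`) equals `Ψ⁺(t_a)`, the set of directions nondecreasing at `t_a`. -/
theorem stmt16 (A A' : ℝ → Matrix (Fin 2) (Fin 2) ℝ)
    (hA' : ∀ t i j, HasDerivAt (fun s => A s i j) (A' t i j) t)
    (S Mhat : ℝ → Matrix (Fin 2) (Fin 2) ℝ)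
    (hS : ∀ t, S t = (1 / 2 : ℝ) • (A t + (A t)ᵀ))
    (hM : ∀ t, Mhat t = (1 / 2 : ℝ) • (A' t + (A' t)ᵀ) + S t * A t + (A t)ᵀ * S t)
    (ta tb : ℝ) (hab : ta ≤ tb)
    (hInd : ∀ t ∈ Set.Icc ta tb, (∃ u : Fin 2 → ℝ, 0 < u ⬝ᵥ (S t).mulVec u) ∧
      (∃ v : Fin 2 → ℝ, v ⬝ᵥ (S t).mulVec v < 0))
    (hpos : ∀ t ∈ Set.Icc ta tb, ∀ z : Fin 2 → ℝ, z ≠ 0 → z ⬝ᵥ (S t).mulVec z = 0 →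
      0 < z ⬝ᵥ (Mhat t).mulVec z)
    (X : ℝ → Matrix (Fin 2) (Fin 2) ℝ) (hX0 : X ta = 1)
    (hXd : ∀ t i j, HasDerivAt (fun s => X s i j) ((A t * X t) i j) t) :
    closure {ξ : Fin 2 → ℝ | ∀ m ∈ Set.Icc ta tb,
        0 < deriv (fun s => (X s).mulVec ξ ⬝ᵥ (X s).mulVec ξ) m}
      = {ξ : Fin 2 → ℝ | 0 ≤ deriv (fun s => (X s).mulVec ξ ⬝ᵥ (X s).mulVec ξ) ta} := by
  -- component derivative of the solution v(s) = X(s) ξ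
  have hvd : ∀ (ξ : Fin 2 → ℝ) (m : ℝ) (i : Fin 2),
      HasDerivAt (fun s => (X s).mulVec ξ i) ((A m).mulVec ((X m).mulVec ξ) i) m := by
    intro ξ m i
    have h : (fun s => (X s).mulVec ξ i) = fun s => X s i 0 * ξ 0 + X s i 1 * ξ 1 := by
      funext s; simp [Matrix.mulVec, dotProduct, Fin.sum_univ_two]
    rw [h]
    have := ((hXd m i 0).mul_const (ξ 0)).add ((hXd m i 1).mul_const (ξ 1))
    refine this.congr_deriv ?_
    simp [Matrix.mulVec, dotProduct, Matrix.mul_apply, Fin.sum_univ_two]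
    ring
  -- derivative of the squared norm N(s) = ‖X(s)ξ‖²
  have hNd : ∀ (ξ : Fin 2 → ℝ) (m : ℝ),
      HasDerivAt (fun s => (X s).mulVec ξ ⬝ᵥ (X s).mulVec ξ)
        (2 * ((X m).mulVec ξ ⬝ᵥ (S m).mulVec ((X m).mulVec ξ))) m := by
    intro ξ m
    have h : (fun s => (X s).mulVec ξ ⬝ᵥ (X s).mulVec ξ)
        = fun s => (X s).mulVec ξ 0 * (X s).mulVec ξ 0 + (X s).mulVec ξ 1 * (X s).mulVec ξ 1 := by
      funext s; simp [dotProduct, Fin.sum_univ_two]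
    rw [h]
    have := ((hvd ξ m 0).mul (hvd ξ m 0)).add ((hvd ξ m 1).mul (hvd ξ m 1))
    refine this.congr_deriv ?_
    simp [hS, Matrix.mulVec, dotProduct, Fin.sum_univ_two, Matrix.transpose_apply,
      smul_eq_mul]
    ring
  -- derivative of the strain Q(s) = v(s) ⬝ S(s) v(s) is v ⬝ M̂ v
  have hQd : ∀ (ξ : Fin 2 → ℝ) (m : ℝ),
      HasDerivAt (fun s => (X s).mulVec ξ ⬝ᵥ (S s).mulVec ((X s).mulVec ξ))
        ((X m).mulVec ξ ⬝ᵥ (Mhat m).mulVec ((X m).mulVec ξ)) m := by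
    intro ξ m
    have hSd : ∀ (i j : Fin 2), HasDerivAt (fun s => S s i j)
        ((1/2 : ℝ) * (A' m i j + A' m j i)) m := by
      intro i j
      have h : (fun s => S s i j) = fun s => (1/2 : ℝ) * (A s i j + A s j i) := by
        funext s; rw [hS]; simp [Matrix.transpose_apply, smul_eq_mul]
      rw [h]
      exact ((hA' m i j).add (hA' m j i)).const_mul _
    have h : (fun s => (X s).mulVec ξ ⬝ᵥ (S s).mulVec ((X s).mulVec ξ))
        = fun s => (X s).mulVec ξ 0 * (S s 0 0 * (X s).mulVec ξ 0 + S s 0 1 * (X s).mulVec ξ 1)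
          + (X s).mulVec ξ 1 * (S s 1 0 * (X s).mulVec ξ 0 + S s 1 1 * (X s).mulVec ξ 1) := by
      funext s; simp [Matrix.mulVec, dotProduct, Fin.sum_univ_two]
    rw [h]
    have hd := ((hvd ξ m 0).mul
        (((hSd 0 0).mul (hvd ξ m 0)).add ((hSd 0 1).mul (hvd ξ m 1)))).add
      ((hvd ξ m 1).mul (((hSd 1 0).mul (hvd ξ m 0)).add ((hSd 1 1).mul (hvd ξ m 1))))
    refine hd.congr_deriv ?_
    simp [hM, hS, Matrix.mulVec, dotProduct, Matrix.mul_apply, Fin.sum_univ_two,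
      Matrix.transpose_apply, smul_eq_mul]
    ring
  -- the derivative appearing in the statement
  have hderiv : ∀ (ξ : Fin 2 → ℝ) (m : ℝ),
      deriv (fun s => (X s).mulVec ξ ⬝ᵥ (X s).mulVec ξ) m
        = 2 * ((X m).mulVec ξ ⬝ᵥ (S m).mulVec ((X m).mulVec ξ)) := fun ξ m => (hNd ξ m).deriv
  have hXta : ∀ ξ : Fin 2 → ℝ, (X ta).mulVec ξ = ξ := by
    intro ξ; rw [hX0, Matrix.one_mulVec]
  -- key positivity propagation
  have key : ∀ ξ : Fin 2 → ℝ, 0 < ξ ⬝ᵥ (S ta).mulVec ξ →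
      ∀ m ∈ Set.Icc ta tb, 0 < (X m).mulVec ξ ⬝ᵥ (S m).mulVec ((X m).mulVec ξ) := by
    intro ξ hξ
    apply stmt16_barrier ta tb _ (fun s => (X s).mulVec ξ ⬝ᵥ (X s).mulVec ξ)
      (fun m => (X m).mulVec ξ ⬝ᵥ (Mhat m).mulVec ((X m).mulVec ξ))
      (hQd ξ) (hNd ξ)
    · intro m hm hN hQ0
      apply hpos m hm _ _ hQ0
      intro hz
      rw [hz] at hN
      rw [hXta] at hN
      simp [dotProduct_zero] at hN
      have h0 : (0:ℝ) ≤ ξ 0 * ξ 0 + ξ 1 * ξ 1 :=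
        add_nonneg (mul_self_nonneg _) (mul_self_nonneg _)
      linarith
    · rw [hXta]; exact hξ
  -- now the set equality
  apply Set.Subset.antisymm
  · -- closure ⊆ Ψ⁺ since Ψ⁺ is closed and contains the unstable fibre
    apply closure_minimal
    · intro ξ hξ
      exact le_of_lt (hξ ta ⟨le_refl ta, hab⟩)
    · have hrw : {ξ : Fin 2 → ℝ | 0 ≤ deriv (fun s => (X s).mulVec ξ ⬝ᵥ (X s).mulVec ξ) ta}
          = (fun ξ : Fin 2 → ℝ => ξ ⬝ᵥ (S ta).mulVec ξ) ⁻¹' Set.Ici 0 := by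
        ext ξ
        simp only [Set.mem_setOf_eq, Set.mem_preimage, Set.mem_Ici, hderiv, hXta]
        constructor <;> intro h <;> linarith
      rw [hrw]
      apply IsClosed.preimage _ isClosed_Ici
      have : (fun ξ : Fin 2 → ℝ => ξ ⬝ᵥ (S ta).mulVec ξ)
          = fun ξ : Fin 2 → ℝ => ξ 0 * (S ta 0 0 * ξ 0 + S ta 0 1 * ξ 1)
            + ξ 1 * (S ta 1 0 * ξ 0 + S ta 1 1 * ξ 1) := by
        funext ξ; simp [Matrix.mulVec, dotProduct, Fin.sum_univ_two]
      rw [this]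
      fun_prop
  · -- Ψ⁺ ⊆ closure
    intro ξ hξ
    simp only [Set.mem_setOf_eq, hderiv, hXta] at hξ
    have hq : 0 ≤ ξ ⬝ᵥ (S ta).mulVec ξ := by linarith
    rcases lt_or_eq_of_le hq with hq | hq
    · -- strictly positive: already in the unstable fibre
      apply subset_closure
      intro m hm
      rw [hderiv]
      have := key ξ hq m hm
      linarith
    · -- on the boundary: approximate along a direction with positive strain
      obtain ⟨u, hu⟩ := (hInd ta ⟨le_refl ta, hab⟩).1
      set B : ℝ := ξ ⬝ᵥ (S ta).mulVec u + u ⬝ᵥ (S ta).mulVec ξ with hB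
      set sg : ℝ := if 0 ≤ B then 1 else -1 with hsg
      have hmem : ∀ t : ℝ, 0 < t → 0 < (ξ + (sg * t) • u) ⬝ᵥ (S ta).mulVec (ξ + (sg * t) • u) := by
        intro t ht
        rw [stmt16_quad_expand, ← hq, ← hB]
        by_cases hb : 0 ≤ B
        · rw [hsg]; simp only [if_pos hb]
          have h1 : 0 ≤ 1 * t * B := by positivity
          have h2 : 0 < (1 * t) ^ 2 * (u ⬝ᵥ (S ta).mulVec u) := by
            apply mul_pos (by positivity) hu
          linarith
        · rw [hsg]; simp only [if_neg hb]
          push_neg at hb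
          have h1 : 0 < -1 * t * B := by
            have : -1 * t * B = t * (-B) := by ring
            rw [this]; exact mul_pos ht (by linarith)
          have h2 : 0 < (-1 * t) ^ 2 * (u ⬝ᵥ (S ta).mulVec u) := by
            apply mul_pos (by positivity) hu
          linarith
      -- the approximating family tends to ξ
      have htend : Filter.Tendsto (fun t : ℝ => ξ + (sg * t) • u) (𝓝[>] (0:ℝ)) (𝓝 ξ) := by
        have hc : Continuous (fun t : ℝ => ξ + (sg * t) • u) := by fun_prop
        have := (hc.tendsto 0).mono_left (nhdsWithin_le_nhds (s := Set.Ioi (0:ℝ)))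
        simpa using this
      refine mem_closure_of_tendsto htend ?_
      filter_upwards [self_mem_nhdsWithin] with t ht
      intro m hm
      rw [hderiv]
      have := key _ (hmem t ht) m hm
      linarith
end
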